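/- The function f(t) = -t^p on [0,∞) is superquadratic whenever 1 < p ≤ 2; that is, for every a ≥ 0 there exists C_a ∈ ℝ such that -b^p ≥ -a^p + C_a (b - a) - |b - a|^p for all b ≥ 0. -/

import Mathlib

open Real Set

/-- Subadditivity of real rpow with exponent in [0,1]. -/
lemma aux_rpow_add_le {q x y : ℝ} (hq0 : 0 ≤ q) (hq1 : q ≤ 1) (hx : 0 ≤ x) (hy : 0 ≤ y) :
    (x + y) ^ q ≤ x ^ q + y ^ q := by
  have h := NNReal.rpow_add_le_add_rpow x.toNNReal y.toNNReal hq0 hq1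
  rw [← Real.toNNReal_add hx hy] at h
  have h2 := NNReal.coe_le_coe.mpr h
  simpa [NNReal.coe_rpow, Real.coe_toNNReal x hx, Real.coe_toNNReal y hy,
    Real.coe_toNNReal _ (add_nonneg hx hy)] using h2

lemma aux_case1 (p : ℝ) (hp1 : 1 < p) (hp2 : p ≤ 2) {a b : ℝ} (ha : 0 ≤ a) (hab : a ≤ b) :
    0 ≤ a ^ p + p * a ^ (p - 1) * (b - a) + (b - a) ^ p - b ^ p := by
  set g : ℝ → ℝ := fun x => a ^ p + p * a ^ (p - 1) * (x - a) + (x - a) ^ p - x ^ p with hg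
  set g' : ℝ → ℝ := fun x => p * a ^ (p - 1) + p * (x - a) ^ (p - 1) - p * x ^ (p - 1) with hg'
  have hderiv : ∀ x : ℝ, HasDerivAt g (g' x) x := by
    intro x
    have h1 : HasDerivAt (fun y : ℝ => (y - a) ^ p) (p * (x - a) ^ (p - 1) * 1) x :=
      (Real.hasDerivAt_rpow_const (Or.inr hp1.le)).comp x ((hasDerivAt_id x).sub_const a)
    have h2 : HasDerivAt (fun y : ℝ => y ^ p) (p * x ^ (p - 1)) x :=
      Real.hasDerivAt_rpow_const (Or.inr hp1.le)
    have h3 : HasDerivAt (fun y : ℝ => p * a ^ (p - 1) * (y - a)) (p * a ^ (p - 1)) x := by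
      simpa using (((hasDerivAt_id x).sub_const a).const_mul (p * a ^ (p - 1)))
    have := ((h3.const_add (a ^ p)).add h1).sub h2
    exact this.congr_deriv (by ring)
  have hmono : MonotoneOn g (Ici a) := by
    apply monotoneOn_of_hasDerivWithinAt_nonneg (convex_Ici a)
      (fun x _ => (hderiv x).continuousAt.continuousWithinAt)
      (fun x _ => (hderiv x).hasDerivWithinAt)
    intro x hx
    rw [interior_Ici] at hx
    have hxa : a < x := hx
    have hsub : x ^ (p - 1) ≤ a ^ (p - 1) + (x - a) ^ (p - 1) := by
      have := aux_rpow_add_le (q := p - 1) (by linarith) (by linarith) ha (by linarith : (0:ℝ) ≤ x - a)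
      simpa using this
    have hp0 : 0 < p := by linarith
    simp only [hg']
    nlinarith [mul_le_mul_of_nonneg_left hsub hp0.le]
  have h0 : g a ≤ g b := hmono self_mem_Ici hab hab
  have hga : g a = 0 := by
    simp [hg, Real.zero_rpow (by positivity : p ≠ 0)]
  rw [hga] at h0
  simpa [hg] using h0

lemma aux_case2 (p : ℝ) (hp1 : 1 < p) (hp2 : p ≤ 2) {a b : ℝ} (hb : 0 ≤ b) (hab : b ≤ a) :
    0 ≤ a ^ p + p * a ^ (p - 1) * (b - a) + (a - b) ^ p - b ^ p := by
  set h : ℝ → ℝ := fun x => a ^ p + p * a ^ (p - 1) * (x - a) + (a - x) ^ p - x ^ p with hh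
  set h' : ℝ → ℝ := fun x => p * a ^ (p - 1) - p * (a - x) ^ (p - 1) - p * x ^ (p - 1) with hh'
  have hderiv : ∀ x : ℝ, HasDerivAt h (h' x) x := by
    intro x
    have h1 : HasDerivAt (fun y : ℝ => (a - y) ^ p) (p * (a - x) ^ (p - 1) * (-1)) x :=
      (Real.hasDerivAt_rpow_const (Or.inr hp1.le)).comp x ((hasDerivAt_id x).const_sub a)
    have h2 : HasDerivAt (fun y : ℝ => y ^ p) (p * x ^ (p - 1)) x :=
      Real.hasDerivAt_rpow_const (Or.inr hp1.le)
    have h3 : HasDerivAt (fun y : ℝ => p * a ^ (p - 1) * (y - a)) (p * a ^ (p - 1)) x := by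
      simpa using (((hasDerivAt_id x).sub_const a).const_mul (p * a ^ (p - 1)))
    have := ((h3.const_add (a ^ p)).add h1).sub h2
    exact this.congr_deriv (by ring)
  have hanti : AntitoneOn h (Icc 0 a) := by
    apply antitoneOn_of_hasDerivWithinAt_nonpos (convex_Icc 0 a)
      (fun x _ => (hderiv x).continuousAt.continuousWithinAt)
      (fun x _ => (hderiv x).hasDerivWithinAt)
    intro x hx
    rw [interior_Icc] at hx
    obtain ⟨hx0, hxa⟩ := hx
    have hsub : a ^ (p - 1) ≤ x ^ (p - 1) + (a - x) ^ (p - 1) := by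
      have := aux_rpow_add_le (q := p - 1) (by linarith) (by linarith) hx0.le
        (by linarith : (0:ℝ) ≤ a - x)
      simpa using this
    have hp0 : 0 < p := by linarith
    simp only [hh']
    nlinarith [mul_le_mul_of_nonneg_left hsub hp0.le]
  have h0 : h b ≥ h a := hanti ⟨hb, hab⟩ ⟨le_trans hb hab, le_refl a⟩ hab
  have hha : h a = 0 := by
    simp [hh, Real.zero_rpow (by positivity : p ≠ 0)]
  rw [hha] at h0
  simpa [hh] using h0

theorem neg_rpow_superquadratic (p : ℝ) (hp1 : 1 < p) (hp2 : p ≤ 2) :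
    ∀ a : ℝ, 0 ≤ a → ∃ C : ℝ,
      ∀ b : ℝ, 0 ≤ b → -b ^ p ≥ -a ^ p + C * (b - a) - |b - a| ^ p := by
  intro a ha
  refine ⟨-(p * a ^ (p - 1)), fun b hb => ?_⟩
  rcases le_total a b with hab | hab
  · have key := aux_case1 p hp1 hp2 ha hab
    rw [abs_of_nonneg (by linarith : (0:ℝ) ≤ b - a)]
    linarith
  · have key := aux_case2 p hp1 hp2 hb hab
    rw [abs_of_nonpos (by linarith : b - a ≤ 0)]
    have : -(b - a) = a - b := by ring
    rw [this]
    linarith
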